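/- The normalized (p,q)-Rogers-Szegő polynomial ψ_n(x;p,q) satisfies the (p,q)-difference equation ((p-q) x D_{p,q}² - (η_p + p^{n-1} x η_{p^{-1}}) D_{p,q} + [n]_{p,q}) ψ_n(x;p,q) = 0. -/

import Mathlib

/-- The (p,q)-number `[n]_{p,q} = (p^n - q^n)/(p-q)`. -/
noncomputable def pqNum (p q : ℝ) (n : ℕ) : ℝ := (p ^ n - q ^ n) / (p - q)

/-- The (p,q)-factorial `[n]_{p,q}!`. -/
noncomputable def pqFac (p q : ℝ) (n : ℕ) : ℝ := ∏ j ∈ Finset.range n, pqNum p q (j + 1)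

/-- The (p,q)-binomial coefficient. -/
noncomputable def pqBinom (p q : ℝ) (n k : ℕ) : ℝ :=
  pqFac p q n / (pqFac p q k * pqFac p q (n - k))

/-- The (p,q)-Rogers-Szegő polynomial `H_n(x;p,q)`. -/
noncomputable def pqRogersSzego (p q : ℝ) (n : ℕ) (x : ℝ) : ℝ :=
  ∑ k ∈ Finset.range (n + 1), pqBinom p q n k * x ^ k

/-- The normalized (p,q)-Rogers-Szegő polynomial `ψ_n(x;p,q)`. -/
noncomputable def psiPQ (p q : ℝ) (n : ℕ) (x : ℝ) : ℝ :=
  pqRogersSzego p q n x / Real.sqrt (pqFac p q n)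

/-- The (p,q)-difference operator. -/
noncomputable def Dpq (p q : ℝ) (f : ℝ → ℝ) (x : ℝ) : ℝ :=
  (f (p * x) - f (q * x)) / ((p - q) * x)

section Aux
variable {p q : ℝ} (hq0 : 0 < q) (hqp : q < p)
include hq0 hqp

lemma pqNum_pos (m : ℕ) (hm : m ≠ 0) : 0 < pqNum p q m := by
  have h : q ^ m < p ^ m := pow_lt_pow_left₀ hqp hq0.le hm
  exact div_pos (by linarith) (by linarith)

lemma pqFac_pos (m : ℕ) : 0 < pqFac p q m :=
  Finset.prod_pos fun j _ => pqNum_pos hq0 hqp _ (by omega)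

omit hq0 hqp in
lemma pqFac_succ (p q : ℝ) (m : ℕ) : pqFac p q (m + 1) = pqFac p q m * pqNum p q (m + 1) :=
  Finset.prod_range_succ _ _

lemma pqBinom_zero (n : ℕ) : pqBinom p q n 0 = 1 := by
  unfold pqBinom
  have h0 : pqFac p q 0 = 1 := by simp [pqFac]
  simp [h0, div_self (pqFac_pos hq0 hqp n).ne']

lemma pqBinom_self (n : ℕ) : pqBinom p q n n = 1 := by
  unfold pqBinom
  have h0 : pqFac p q 0 = 1 := by simp [pqFac]
  simp [h0, div_self (pqFac_pos hq0 hqp n).ne']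

lemma binom_mul_num (a b : ℕ) :
    pqBinom p q (a + b + 1) (a + 1) * pqNum p q (a + 1)
      = pqNum p q (a + b + 1) * pqBinom p q (a + b) a := by
  have h1 : (a + b + 1) - (a + 1) = b := by omega
  have h2 : (a + b) - a = b := by omega
  have e : a + b + 1 = (a + b) + 1 := rfl
  unfold pqBinom
  rw [h1, h2, e, pqFac_succ p q (a + b), pqFac_succ p q a]
  have hfa := (pqFac_pos hq0 hqp a).ne'
  have hfb := (pqFac_pos hq0 hqp b).ne'
  have hfab := (pqFac_pos hq0 hqp (a + b)).ne'
  have hna := (pqNum_pos hq0 hqp (a + 1) (by omega)).ne'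
  field_simp
  try ring

omit hq0 in
lemma pqNum_pascal (a b : ℕ) :
    pqNum p q (a + b + 2) = q ^ (a + 1) * pqNum p q (b + 1) + p ^ (b + 1) * pqNum p q (a + 1) := by
  unfold pqNum
  have hpq : p - q ≠ 0 := sub_ne_zero.mpr (ne_of_gt hqp)
  field_simp
  ring

lemma pqBinom_pascal (a b : ℕ) :
    pqBinom p q (a + b + 2) (a + 1)
      = q ^ (a + 1) * pqBinom p q (a + b + 1) (a + 1) + p ^ (b + 1) * pqBinom p q (a + b + 1) a := by
  have h1 : (a + b + 2) - (a + 1) = b + 1 := by omega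
  have h2 : (a + b + 1) - (a + 1) = b := by omega
  have h3 : (a + b + 1) - a = b + 1 := by omega
  have e : a + b + 2 = (a + b + 1) + 1 := rfl
  unfold pqBinom
  rw [h1, h2, h3, e, pqFac_succ p q (a + b + 1), pqFac_succ p q a, pqFac_succ p q b,
    pqNum_pascal hqp a b]
  have hfa := (pqFac_pos hq0 hqp a).ne'
  have hfb := (pqFac_pos hq0 hqp b).ne'
  have hfab := (pqFac_pos hq0 hqp (a + b + 1)).ne'
  have hna := (pqNum_pos hq0 hqp (a + 1) (by omega)).ne'
  have hnb := (pqNum_pos hq0 hqp (b + 1) (by omega)).ne'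
  field_simp
  try ring

/-- `H_{m+1}(py) - H_{m+1}(qy) = (p-q) y [m+1] H_m(y)`. -/
lemma dpq_H (m : ℕ) (y : ℝ) :
    pqRogersSzego p q (m + 1) (p * y) - pqRogersSzego p q (m + 1) (q * y)
      = (p - q) * y * (pqNum p q (m + 1) * pqRogersSzego p q m y) := by
  unfold pqRogersSzego
  rw [← Finset.sum_sub_distrib, Finset.sum_range_succ']
  simp only [pow_zero, mul_one, sub_self, add_zero]
  rw [Finset.mul_sum, Finset.mul_sum]
  refine Finset.sum_congr rfl fun j hj => ?_
  rw [Finset.mem_range] at hj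
  obtain ⟨b, hb⟩ : ∃ b, m = j + b := ⟨m - j, by omega⟩
  subst hb
  have key := binom_mul_num hq0 hqp j b
  have hpq : p - q ≠ 0 := sub_ne_zero.mpr (ne_of_gt hqp)
  have hnum : pqNum p q (j + 1) * (p - q) = p ^ (j + 1) - q ^ (j + 1) := by
    unfold pqNum; field_simp
  calc pqBinom p q (j + b + 1) (j + 1) * (p * y) ^ (j + 1)
        - pqBinom p q (j + b + 1) (j + 1) * (q * y) ^ (j + 1)
      = pqBinom p q (j + b + 1) (j + 1) * (pqNum p q (j + 1) * (p - q)) * y ^ (j + 1) := by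
        rw [hnum]; ring
    _ = (pqNum p q (j + b + 1) * pqBinom p q (j + b) j) * (p - q) * y ^ (j + 1) := by
        rw [← key]; ring
    _ = (p - q) * y * (pqNum p q (j + b + 1) * (pqBinom p q (j + b) j * y ^ j)) := by ring

/-- `H_{m+1}(x) = H_m(qx) + p^m x H_m(x/p)`. -/
lemma H_rec (m : ℕ) (x : ℝ) :
    pqRogersSzego p q (m + 1) x
      = pqRogersSzego p q m (q * x) + p ^ m * x * pqRogersSzego p q m (p⁻¹ * x) := by
  have hp : (0:ℝ) < p := lt_trans hq0 hqp
  have hL : pqRogersSzego p q (m + 1) x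
      = pqBinom p q (m + 1) 0
        + ((∑ j ∈ Finset.range m, pqBinom p q (m + 1) (j + 1) * x ^ (j + 1))
          + pqBinom p q (m + 1) (m + 1) * x ^ (m + 1)) := by
    unfold pqRogersSzego
    rw [Finset.sum_range_succ', Finset.sum_range_succ]
    ring
  have hR1 : pqRogersSzego p q m (q * x)
      = pqBinom p q m 0
        + ∑ j ∈ Finset.range m, pqBinom p q m (j + 1) * (q * x) ^ (j + 1) := by
    unfold pqRogersSzego
    rw [Finset.sum_range_succ']
    simp only [pow_zero, mul_one]
    ring
  have hR2 : p ^ m * x * pqRogersSzego p q m (p⁻¹ * x)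
      = (∑ j ∈ Finset.range m, p ^ m * x * (pqBinom p q m j * (p⁻¹ * x) ^ j))
        + p ^ m * x * (pqBinom p q m m * (p⁻¹ * x) ^ m) := by
    unfold pqRogersSzego
    rw [Finset.mul_sum, Finset.sum_range_succ]
  have hlast : p ^ m * x * (pqBinom p q m m * (p⁻¹ * x) ^ m)
      = pqBinom p q (m + 1) (m + 1) * x ^ (m + 1) := by
    rw [pqBinom_self hq0 hqp, pqBinom_self hq0 hqp, mul_pow, inv_pow]
    field_simp
    ring
  have hmain : ∀ j ∈ Finset.range m,
      pqBinom p q (m + 1) (j + 1) * x ^ (j + 1)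
        = pqBinom p q m (j + 1) * (q * x) ^ (j + 1)
          + p ^ m * x * (pqBinom p q m j * (p⁻¹ * x) ^ j) := by
    intro j hj
    rw [Finset.mem_range] at hj
    obtain ⟨b, hb⟩ : ∃ b, m = j + b + 1 := ⟨m - j - 1, by omega⟩
    subst hb
    have e : j + b + 1 + 1 = j + b + 2 := rfl
    rw [e, pqBinom_pascal hq0 hqp j b]
    have hpow : (p:ℝ) ^ (j + b + 1) * (p⁻¹) ^ j = p ^ (b + 1) := by
      rw [inv_pow, pow_add, pow_add]
      field_simp
      ring
    rw [mul_pow, mul_pow, ← hpow]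
    ring
  rw [hL, hR1, hR2, ← hlast, Finset.sum_congr rfl hmain, Finset.sum_add_distrib,
    pqBinom_zero hq0 hqp, pqBinom_zero hq0 hqp]
  ring

end Aux

section Main
variable {p q : ℝ} (hq0 : 0 < q) (hqp : q < p)
include hq0 hqp

lemma dpq_psi (m : ℕ) {y : ℝ} (hy : y ≠ 0) :
    Dpq p q (psiPQ p q (m + 1)) y
      = pqNum p q (m + 1) * pqRogersSzego p q m y / Real.sqrt (pqFac p q (m + 1)) := by
  have hpq : p - q ≠ 0 := sub_ne_zero.mpr (ne_of_gt hqp)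
  have hC : Real.sqrt (pqFac p q (m + 1)) ≠ 0 :=
    (Real.sqrt_pos.mpr (pqFac_pos hq0 hqp (m + 1))).ne'
  unfold Dpq psiPQ
  rw [div_sub_div_same, dpq_H hq0 hqp m y]
  field_simp
  try ring

end Main

/-- The (p,q)-difference equation
`((p-q) x D_{p,q}² - (η_p + p^{n-1} x η_{p⁻¹}) D_{p,q} + [n]_{p,q}) ψ_n(x;p,q) = 0`,
where `η_s f(x) = f(sx)`. -/
theorem psiPQ_pq_difference_equation (p q : ℝ) (hq0 : 0 < q) (hqp : q < p) (n : ℕ)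
    (x : ℝ) (hx : x ≠ 0) :
    (p - q) * x * Dpq p q (Dpq p q (psiPQ p q n)) x
        - (Dpq p q (psiPQ p q n) (p * x) + p ^ (n - 1) * x * Dpq p q (psiPQ p q n) (p⁻¹ * x))
        + pqNum p q n * psiPQ p q n x = 0 := by
  have hp : (0:ℝ) < p := lt_trans hq0 hqp
  have hpq : p - q ≠ 0 := sub_ne_zero.mpr (ne_of_gt hqp)
  rcases n with _ | m
  · have hψ : ∀ y : ℝ, psiPQ p q 0 y = 1 := by
      intro y
      simp [psiPQ, pqRogersSzego, pqBinom, pqFac, Finset.sum_range_one]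
    have hD : ∀ y : ℝ, Dpq p q (psiPQ p q 0) y = 0 := by
      intro y; simp [Dpq, hψ]
    have hDD : Dpq p q (Dpq p q (psiPQ p q 0)) x = 0 := by
      rw [show Dpq p q (Dpq p q (psiPQ p q 0)) x
          = (Dpq p q (psiPQ p q 0) (p * x) - Dpq p q (psiPQ p q 0) (q * x)) / ((p - q) * x)
          from rfl, hD, hD]
      simp
    rw [hDD, hD, hD]
    simp [pqNum]
  · have hC : Real.sqrt (pqFac p q (m + 1)) ≠ 0 :=
      (Real.sqrt_pos.mpr (pqFac_pos hq0 hqp (m + 1))).ne'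
    have hdd : Dpq p q (Dpq p q (psiPQ p q (m + 1))) x
        = (pqNum p q (m + 1) * pqRogersSzego p q m (p * x) / Real.sqrt (pqFac p q (m + 1))
            - pqNum p q (m + 1) * pqRogersSzego p q m (q * x) / Real.sqrt (pqFac p q (m + 1)))
          / ((p - q) * x) := by
      rw [show Dpq p q (Dpq p q (psiPQ p q (m + 1))) x
          = (Dpq p q (psiPQ p q (m + 1)) (p * x) - Dpq p q (psiPQ p q (m + 1)) (q * x))
            / ((p - q) * x) from rfl,
        dpq_psi hq0 hqp m (mul_ne_zero hp.ne' hx), dpq_psi hq0 hqp m (mul_ne_zero hq0.ne' hx)]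
    rw [hdd, dpq_psi hq0 hqp m (mul_ne_zero hp.ne' hx),
      dpq_psi hq0 hqp m (mul_ne_zero (inv_ne_zero hp.ne') hx),
      show psiPQ p q (m + 1) x = pqRogersSzego p q (m + 1) x / Real.sqrt (pqFac p q (m + 1))
        from rfl,
      show (m + 1) - 1 = m from rfl,
      H_rec hq0 hqp m x]
    field_simp
    ring
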